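/- (Gradient of the fractional potential.) For every agent i, every resource e, and every x ∈ (ℝ^E)^n, the partial derivative of Φ with respect to the coordinate x_{i,e} equals Σ_{S ⊆ {1,…,n}\{i}} (∏_{j ∈ S} x_{j,e}) (∏_{j ∉ S, j ≠ i} (1 − x_{j,e})) · c_e(|S| + 1). -/

import Mathlib

open Finset

/-- **Gradient of the fractional potential.**
For the fractional potential
`Φ(x) = ∑_e ∑_{S ⊆ [n]} (∏_{j∈S} x_{j,e}) (∏_{j∉S} (1-x_{j,e})) ∑_{ℓ=0}^{|S|} c_e(ℓ)`
on `(ℝ^E)^n`, the partial derivative with respect to the coordinate `x_{i,e}`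
equals `∑_{S ⊆ [n]∖{i}} (∏_{j∈S} x_{j,e}) (∏_{j∉S, j≠i} (1-x_{j,e})) c_e(|S|+1)`. -/
theorem fractional_potential_partial_deriv
    {E : Type*} [Fintype E] [DecidableEq E]
    (n : ℕ)
    (c : E → ℕ → ℝ)
    (Φ : ((Fin n × E) → ℝ) → ℝ)
    (hΦ : ∀ x, Φ x = ∑ e : E, ∑ S ∈ (univ : Finset (Fin n)).powerset,
        (∏ j ∈ S, x (j, e)) * (∏ j ∈ univ \ S, (1 - x (j, e))) *
          ∑ ℓ ∈ Finset.range (S.card + 1), c e ℓ)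
    (i : Fin n) (e : E) (x : (Fin n × E) → ℝ) :
    deriv (fun t => Φ (Function.update x (i, e) t)) (x (i, e)) =
      ∑ S ∈ (univ.erase i).powerset,
        (∏ j ∈ S, x (j, e)) * (∏ j ∈ (univ.erase i) \ S, (1 - x (j, e))) *
          c e (S.card + 1) := by
  classical
  set b : ℝ := ∑ S ∈ (univ.erase i).powerset,
      (∏ j ∈ S, x (j, e)) * (∏ j ∈ (univ.erase i) \ S, (1 - x (j, e))) *
        c e (S.card + 1) with hb
  set K : ℝ := ∑ e' ∈ univ.erase e, ∑ S ∈ (univ : Finset (Fin n)).powerset,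
      (∏ j ∈ S, x (j, e')) * (∏ j ∈ univ \ S, (1 - x (j, e'))) *
        ∑ ℓ ∈ Finset.range (S.card + 1), c e' ℓ with hK
  set K2 : ℝ := ∑ S ∈ (univ.erase i).powerset,
      (∏ j ∈ S, x (j, e)) * (∏ j ∈ (univ.erase i) \ S, (1 - x (j, e))) *
        ∑ ℓ ∈ Finset.range (S.card + 1), c e ℓ with hK2
  have hsplit : ∀ (f : Finset (Fin n) → ℝ),
      ∑ S ∈ (univ : Finset (Fin n)).powerset, f S
        = ∑ T ∈ (univ.erase i).powerset, (f T + f (insert i T)) := by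
    intro f
    rw [Finset.sum_add_distrib]
    conv_lhs => rw [← insert_erase (mem_univ i)]
    rw [Finset.sum_powerset_insert (notMem_erase i univ)]
  have hfun : ∀ t : ℝ, Φ (Function.update x (i, e) t) = (K + K2) + t * b := by
    intro t
    set y : (Fin n × E) → ℝ := Function.update x (i, e) t with hy
    have hyne : ∀ (j : Fin n) (e' : E), (j, e') ≠ (i, e) → y (j, e') = x (j, e') := by
      intro j e' h
      simp [hy, Function.update_of_ne h]
    rw [hΦ]
    rw [← Finset.add_sum_erase _ _ (mem_univ e)]
    have hKeq : ∑ e' ∈ univ.erase e, ∑ S ∈ (univ : Finset (Fin n)).powerset,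
        (∏ j ∈ S, y (j, e')) * (∏ j ∈ univ \ S, (1 - y (j, e'))) *
          ∑ ℓ ∈ Finset.range (S.card + 1), c e' ℓ = K := by
      rw [hK]
      refine Finset.sum_congr rfl fun e' he' => Finset.sum_congr rfl fun S _ => ?_
      have hne : e' ≠ e := (mem_erase.mp he').1
      have h1 : ∀ j : Fin n, y (j, e') = x (j, e') := fun j =>
        hyne j e' (fun h => hne (congrArg Prod.snd h))
      simp only [h1]
    have hterm : ∑ S ∈ (univ : Finset (Fin n)).powerset,
        (∏ j ∈ S, y (j, e)) * (∏ j ∈ univ \ S, (1 - y (j, e))) *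
          ∑ ℓ ∈ Finset.range (S.card + 1), c e ℓ = K2 + t * b := by
      rw [hsplit]
      rw [hK2, hb, Finset.mul_sum, ← Finset.sum_add_distrib]
      refine Finset.sum_congr rfl fun T hT => ?_
      have hTsub : T ⊆ univ.erase i := mem_powerset.mp hT
      have hiT : i ∉ T := fun h => (notMem_erase i univ) (hTsub h)
      have hA : ∏ j ∈ T, y (j, e) = ∏ j ∈ T, x (j, e) :=
        Finset.prod_congr rfl fun j hj =>
          hyne j e (fun h => hiT (by simp only [Prod.mk.injEq] at h; exact h.1 ▸ hj))
      have hset1 : (univ : Finset (Fin n)) \ T = insert i ((univ.erase i) \ T) := by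
        ext j
        by_cases hj : j = i <;> simp [hj, hiT]
      have hset2 : (univ : Finset (Fin n)) \ insert i T = (univ.erase i) \ T := by
        ext j
        simp [not_or, and_comm]
      have hiT2 : i ∉ (univ.erase i) \ T := fun h => (notMem_erase i univ) (mem_sdiff.mp h).1
      have hB : ∏ j ∈ (univ : Finset (Fin n)) \ T, (1 - y (j, e))
          = (1 - t) * ∏ j ∈ (univ.erase i) \ T, (1 - x (j, e)) := by
        rw [hset1, Finset.prod_insert hiT2]
        have : y (i, e) = t := by simp [hy]
        rw [this]
        congr 1
        exact Finset.prod_congr rfl fun j hj =>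
          congrArg (1 - ·) (hyne j e (fun h =>
            (mem_erase.mp (mem_sdiff.mp hj).1).1 (congrArg Prod.fst h)))
      have hA2 : ∏ j ∈ insert i T, y (j, e) = t * ∏ j ∈ T, x (j, e) := by
        rw [Finset.prod_insert hiT, hA]
        simp [hy]
      have hB2 : ∏ j ∈ (univ : Finset (Fin n)) \ insert i T, (1 - y (j, e))
          = ∏ j ∈ (univ.erase i) \ T, (1 - x (j, e)) := by
        rw [hset2]
        exact Finset.prod_congr rfl fun j hj =>
          congrArg (1 - ·) (hyne j e (fun h =>
            (mem_erase.mp (mem_sdiff.mp hj).1).1 (congrArg Prod.fst h)))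
      rw [hA, hB, hA2, hB2, Finset.card_insert_of_notMem hiT]
      rw [Finset.sum_range_succ (fun ℓ => c e ℓ) (T.card + 1)]
      ring
    rw [hKeq, hterm]
    ring
  have hfeq : (fun t => Φ (Function.update x (i, e) t)) = fun t : ℝ => (K + K2) + t * b :=
    funext hfun
  rw [hfeq]
  have hd : HasDerivAt (fun t : ℝ => (K + K2) + t * b) b (x (i, e)) := by
    simpa using ((hasDerivAt_id (x (i, e))).mul_const b).const_add (K + K2)
  exact hd.deriv
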